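/- arXiv:1708.01085 — 2 statements merged into one kernel-verified Lean document; each statement's English description precedes it below -/
import Mathlib

section
/- Unconditional envelopment theorem, second part: Assume m·[1 − F(θ)] ≠ 1 whenever r ≤ m·μ. If the weakest-first process dies out almost surely (q_W = 1), then every resource dependent branching process Γ on the same arrays dies out almost surely (q_Γ = 1), and consequently the strongest-first process dies out almost surely (q_S = 1). -/
open MeasureTheory ProbabilityTheory Filter
open scoped ENNReal

noncomputable section

/-- Weakest-first counting function `N(t,s)` for claims `c 1, …, c t`:
the largest `k ≤ t` such that some `k` of the claims (equivalently, the `k`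
smallest ones) have total at most `s`. -/
def wfCount (t : ℕ) (c : ℕ → ℝ) (s : ℝ) : ℕ :=
  sSup {k | k ≤ t ∧ ∃ A : Finset ℕ, A ⊆ Finset.Icc 1 t ∧ A.card = k ∧ ∑ j ∈ A, c j ≤ s}

/-- Strongest-first counting function `M(t,s)` for claims `c 1, …, c t`:
the largest `k ≤ t` such that the `k` largest of the claims (equivalently,
every `k`-element subset of the claims) have total at most `s`. -/
def sfCount (t : ℕ) (c : ℕ → ℝ) (s : ℝ) : ℕ :=
  sSup {k | k ≤ t ∧ ∀ A : Finset ℕ, A ⊆ Finset.Icc 1 t → A.card = k → ∑ j ∈ A, c j ≤ s}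

/-- Counting function `Q^π(t, (c 1, …, c t), s)` of a policy: given a priority
order `prio t c` on the individuals `1, …, t` (a permutation of `{1, …, t}`
which may depend on the claims), it is the largest `k` such that the sum of the
first `k` claims taken in the priority order does not exceed the resources `s`
(and `0` if already the first such claim exceeds `s`). -/
def policyCount (prio : ℕ → (ℕ → ℝ) → ℕ → ℕ) (t : ℕ) (c : ℕ → ℝ) (s : ℝ) : ℕ :=
  sSup {k | k ≤ t ∧ ∑ j ∈ Finset.Icc 1 k, c (prio t c j) ≤ s}

lemma wfCount_bdd (t : ℕ) (c : ℕ → ℝ) (s : ℝ) :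
    BddAbove {k | k ≤ t ∧ ∃ A : Finset ℕ, A ⊆ Finset.Icc 1 t ∧ A.card = k ∧ ∑ j ∈ A, c j ≤ s} :=
  ⟨t, fun _ hx => hx.1⟩

lemma le_wfCount (t : ℕ) (c : ℕ → ℝ) (s : ℝ) {k : ℕ} (hk : k ≤ t)
    (hA : ∃ A : Finset ℕ, A ⊆ Finset.Icc 1 t ∧ A.card = k ∧ ∑ j ∈ A, c j ≤ s) :
    k ≤ wfCount t c s :=
  le_csSup (wfCount_bdd t c s) ⟨hk, hA⟩

lemma policyCount_le_wfCount (prio : ℕ → (ℕ → ℝ) → ℕ → ℕ) (t : ℕ) (c : ℕ → ℝ) (s : ℝ)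
    (hprio : Set.BijOn (prio t c) (Set.Icc 1 t) (Set.Icc 1 t)) :
    policyCount prio t c s ≤ wfCount t c s := by
  unfold policyCount
  set T := {k | k ≤ t ∧ ∑ j ∈ Finset.Icc 1 k, c (prio t c j) ≤ s} with hT
  rcases Set.eq_empty_or_nonempty T with h | h
  · rw [h, csSup_empty]; exact Nat.zero_le _
  · have hbdd : BddAbove T := ⟨t, fun _ hx => hx.1⟩
    have hmem := Nat.sSup_mem h hbdd
    obtain ⟨hk, hsum⟩ := hmem
    set k := sSup T
    have hsub : (Finset.Icc 1 k : Set ℕ) ⊆ Set.Icc 1 t := by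
      rw [Finset.coe_Icc]
      exact Set.Icc_subset_Icc_right hk
    have hinj : Set.InjOn (prio t c) (Finset.Icc 1 k : Set ℕ) :=
      hprio.injOn.mono hsub
    refine le_wfCount t c s hk ⟨(Finset.Icc 1 k).image (prio t c), ?_, ?_, ?_⟩
    · intro x hx
      obtain ⟨y, hy, rfl⟩ := Finset.mem_image.mp hx
      have := hprio.mapsTo (hsub hy)
      simpa [Finset.mem_Icc, Set.mem_Icc] using this
    · rw [Finset.card_image_of_injOn hinj, Nat.card_Icc]
      omega
    · rwa [Finset.sum_image (fun x hx y hy hxy => hinj hx hy hxy)]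

lemma sfCount_le_wfCount (t : ℕ) (c : ℕ → ℝ) (s : ℝ) :
    sfCount t c s ≤ wfCount t c s := by
  unfold sfCount
  set T := {k | k ≤ t ∧ ∀ A : Finset ℕ, A ⊆ Finset.Icc 1 t → A.card = k → ∑ j ∈ A, c j ≤ s}
    with hT
  rcases Set.eq_empty_or_nonempty T with h | h
  · rw [h, csSup_empty]; exact Nat.zero_le _
  · have hbdd : BddAbove T := ⟨t, fun _ hx => hx.1⟩
    obtain ⟨hk, hall⟩ := Nat.sSup_mem h hbdd
    set k := sSup T
    have hcard : k ≤ (Finset.Icc 1 t).card := by rw [Nat.card_Icc]; omega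
    obtain ⟨A, hA, hAcard⟩ := Finset.exists_subset_card_eq hcard
    exact le_wfCount t c s hk ⟨A, hA, hAcard, hall A hA hAcard⟩

lemma wfCount_mono (c : ℕ → ℝ) {t t' : ℕ} {s s' : ℝ} (ht : t ≤ t') (hs : s ≤ s') :
    wfCount t c s ≤ wfCount t' c s' := by
  unfold wfCount
  set T := {k | k ≤ t ∧ ∃ A : Finset ℕ, A ⊆ Finset.Icc 1 t ∧ A.card = k ∧ ∑ j ∈ A, c j ≤ s}
  rcases Set.eq_empty_or_nonempty T with h | h
  · rw [show sSup T = 0 from by rw [h, csSup_empty]; rfl]; exact Nat.zero_le _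
  · obtain ⟨hk, A, hA, hAcard, hAsum⟩ := Nat.sSup_mem h ⟨t, fun _ hx => hx.1⟩
    exact le_wfCount t' c s' (hk.trans ht)
      ⟨A, hA.trans (Finset.Icc_subset_Icc_right ht), hAcard, hAsum.trans hs⟩

/-- **Unconditional envelopment theorem, second part.**
If `m·[1 − F(θ)] ≠ 1` whenever `r ≤ m·μ`, and the weakest-first process dies
out almost surely (`q_W = 1`), then every RDBP `Γ` on the same arrays dies out
almost surely (`q_Γ = 1`), and consequently so does the strongest-first
process (`q_S = 1`). -/
theorem envelopment_extinction
    {Ω : Type*} [MeasurableSpace Ω] (P : Measure Ω) [IsProbabilityMeasure P]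
    -- the three arrays of random variables
    (D : ℕ → ℕ → Ω → ℕ) (X R : ℕ → ℕ → Ω → ℝ)
    (hDmeas : ∀ n k, Measurable (D n k))
    (hXmeas : ∀ n k, Measurable (X n k))
    (hRmeas : ∀ n k, Measurable (R n k))
    -- all entries of the three arrays are mutually independent
    (hIndep : iIndepFun
      (Sum.elim (fun (nk : ℕ × ℕ) (ω : Ω) => (D nk.1 nk.2 ω : ℝ))
        (Sum.elim (fun (nk : ℕ × ℕ) => X nk.1 nk.2)
          (fun (nk : ℕ × ℕ) => R nk.1 nk.2))) P)
    -- each array is identically distributed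
    (hDid : ∀ n k, Measure.map (D n k) P = Measure.map (D 0 1) P)
    (hXid : ∀ n k, Measure.map (X n k) P = Measure.map (X 0 1) P)
    (hRid : ∀ n k, Measure.map (R n k) P = Measure.map (R 0 1) P)
    (hXnonneg : ∀ n k ω, 0 ≤ X n k ω) (hRnonneg : ∀ n k ω, 0 ≤ R n k ω)
    -- the reproduction law satisfies `p₀ > 0` and `p_j > 0` for some `j > 1`
    (hp0 : 0 < P {ω | D 0 1 ω = 0}) (hpj : ∃ j, 1 < j ∧ 0 < P {ω | D 0 1 ω = j})
    -- finite means
    (hDint : Integrable (fun ω => (D 0 1 ω : ℝ)) P)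
    (hXint : Integrable (X 0 1) P) (hRint : Integrable (R 0 1) P)
    (m : ℝ) (hm : m = ∫ ω, (D 0 1 ω : ℝ) ∂P)
    (μ : ℝ) (hμ : μ = ∫ ω, X 0 1 ω ∂P) (hμpos : 0 < μ)
    (r : ℝ) (hr : r = ∫ ω, R 0 1 ω ∂P)
    -- continuous distribution function of the claims
    (F : ℝ → ℝ) (hF : ∀ x, F x = (P {ω | X 0 1 ω ≤ x}).toReal)
    (hFcont : Continuous F)
    -- if `r ≤ m·μ`, `θ` solves `m ∫_θ^∞ x dF(x) = r` and `m·[1 − F(θ)] ≠ 1`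
    (θ : ℝ) (hθ : r ≤ m * μ → m * ∫ ω in {ω | θ < X 0 1 ω}, X 0 1 ω ∂P = r)
    (hne : r ≤ m * μ → m * (1 - F θ) ≠ 1)
    -- an arbitrary policy: a claims-dependent priority order on `{1, …, t}`
    (prio : ℕ → (ℕ → ℝ) → ℕ → ℕ)
    (hprio : ∀ t c, Set.BijOn (prio t c) (Set.Icc 1 t) (Set.Icc 1 t))
    -- the RDBP `Γ`, the weakest-first process `W` and the strongest-first
    -- process `S`, each started from a single ancestor
    (Γ W S : ℕ → Ω → ℕ)
    (hΓ0 : ∀ ω, Γ 0 ω = 1) (hW0 : ∀ ω, W 0 ω = 1) (hS0 : ∀ ω, S 0 ω = 1)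
    (hΓrec : ∀ n ω, Γ (n + 1) ω =
      policyCount prio (∑ j ∈ Finset.Icc 1 (Γ n ω), D n j ω)
        (fun j => X (n + 1) j ω)
        (∑ j ∈ Finset.Icc 1 (Γ n ω), R n j ω))
    (hWrec : ∀ n ω, W (n + 1) ω =
      wfCount (∑ j ∈ Finset.Icc 1 (W n ω), D n j ω)
        (fun j => X (n + 1) j ω)
        (∑ j ∈ Finset.Icc 1 (W n ω), R n j ω))
    (hSrec : ∀ n ω, S (n + 1) ω =
      sfCount (∑ j ∈ Finset.Icc 1 (S n ω), D n j ω)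
        (fun j => X (n + 1) j ω)
        (∑ j ∈ Finset.Icc 1 (S n ω), R n j ω))
    -- hypothesis: the weakest-first process dies out almost surely
    (hqW : P {ω | Tendsto (fun n => W n ω) atTop (nhds 0)} = 1) :
    P {ω | Tendsto (fun n => Γ n ω) atTop (nhds 0)} = 1 ∧
    P {ω | Tendsto (fun n => S n ω) atTop (nhds 0)} = 1 := by
  -- pointwise domination Γ n ω ≤ W n ω and S n ω ≤ W n ω
  have key : ∀ (Z : ℕ → Ω → ℕ)
      (hrec : ∀ n ω, Z (n + 1) ω ≤
        wfCount (∑ j ∈ Finset.Icc 1 (Z n ω), D n j ω)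
          (fun j => X (n + 1) j ω)
          (∑ j ∈ Finset.Icc 1 (Z n ω), R n j ω))
      (hZ0 : ∀ ω, Z 0 ω = 1), ∀ n ω, Z n ω ≤ W n ω := by
    intro Z hrec hZ0
    intro n
    induction n with
    | zero => intro ω; rw [hZ0, hW0]
    | succ n ih =>
      intro ω
      have h1 : Z (n + 1) ω ≤
          wfCount (∑ j ∈ Finset.Icc 1 (Z n ω), D n j ω)
            (fun j => X (n + 1) j ω)
            (∑ j ∈ Finset.Icc 1 (Z n ω), R n j ω) := hrec n ω
      have hD : (∑ j ∈ Finset.Icc 1 (Z n ω), D n j ω) ≤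
          ∑ j ∈ Finset.Icc 1 (W n ω), D n j ω :=
        Finset.sum_le_sum_of_subset (Finset.Icc_subset_Icc_right (ih ω))
      have hR : (∑ j ∈ Finset.Icc 1 (Z n ω), R n j ω) ≤
          ∑ j ∈ Finset.Icc 1 (W n ω), R n j ω :=
        Finset.sum_le_sum_of_subset_of_nonneg (Finset.Icc_subset_Icc_right (ih ω))
          (fun j _ _ => hRnonneg n j ω)
      calc Z (n + 1) ω ≤ _ := h1
        _ ≤ wfCount (∑ j ∈ Finset.Icc 1 (W n ω), D n j ω)
              (fun j => X (n + 1) j ω)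
              (∑ j ∈ Finset.Icc 1 (W n ω), R n j ω) := wfCount_mono _ hD hR
        _ = W (n + 1) ω := (hWrec n ω).symm
  have hΓW : ∀ n ω, Γ n ω ≤ W n ω := by
    apply key _ _ hΓ0
    intro n ω
    rw [hΓrec n ω]
    exact policyCount_le_wfCount prio _ _ _ (hprio _ _)
  have hSW : ∀ n ω, S n ω ≤ W n ω := by
    apply key _ _ hS0
    intro n ω
    rw [hSrec n ω]
    exact sfCount_le_wfCount _ _ _
  -- if W n ω → 0 then any pointwise dominated ℕ-valued sequence → 0
  have tend : ∀ (Z : ℕ → Ω → ℕ), (∀ n ω, Z n ω ≤ W n ω) →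
      {ω | Tendsto (fun n => W n ω) atTop (nhds 0)} ⊆
      {ω | Tendsto (fun n => Z n ω) atTop (nhds 0)} := by
    intro Z hZ ω hω
    have h0 : ∀ᶠ n in atTop, W n ω = 0 := by
      have : {(0 : ℕ)} ∈ nhds (0 : ℕ) := (isOpen_discrete _).mem_nhds rfl
      filter_upwards [hω this] with n hn using hn
    have hZ0 : ∀ᶠ n in atTop, Z n ω = 0 := by
      filter_upwards [h0] with n hn
      have := hZ n ω
      omega
    exact Tendsto.congr' (hZ0.mono fun n hn => hn.symm) tendsto_const_nhds
  constructor
  · refine le_antisymm (prob_le_one) ?_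
    rw [← hqW]
    exact measure_mono (tend Γ hΓW)
  · refine le_antisymm (prob_le_one) ?_
    rw [← hqW]
    exact measure_mono (tend S hSW)

end
end

section
/- Lorenz curve criterion for extinction of the weakest-first society: Let X be a nonnegative random variable with continuous, strictly increasing cumulative distribution function F satisfying F(0) = 0, finite mean μ > 0, and let m > 1 and 0 < r ≤ m·μ. Let τ ≥ 0 satisfy m∫₀^τ x dF(x) = r. Then m·F(τ) < 1 if and only if LC(1/m) > r/(m·μ). -/
open MeasureTheory Filter Set

noncomputable section

/-- Quantile function (generalized inverse) `F⁻¹(t) = inf {x ≥ 0 : F(x) ≥ t}`. -/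
def quantile (F : ℝ → ℝ) (t : ℝ) : ℝ := sInf {x | 0 ≤ x ∧ t ≤ F x}

/-- Lorenz curve `LC(p) = (1/μ) ∫₀^p F⁻¹(t) dt` of a distribution function `F`
with mean `μ`. -/
def lorenz (F : ℝ → ℝ) (μ : ℝ) (p : ℝ) : ℝ := (1 / μ) * ∫ t in (0:ℝ)..p, quantile F t

lemma quantile_nonneg (F : ℝ → ℝ) (t : ℝ) : 0 ≤ quantile F t :=
  Real.sInf_nonneg fun _ hx => hx.1

lemma quantile_le {F : ℝ → ℝ} {t b : ℝ} (hb : 0 ≤ b) (h : t ≤ F b) : quantile F t ≤ b :=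
  csInf_le ⟨0, fun _ hx => hx.1⟩ ⟨hb, h⟩

lemma quantile_mono {F : ℝ → ℝ} {t t' b : ℝ} (hb : 0 ≤ b) (h' : t' ≤ F b) (htt : t ≤ t') :
    quantile F t ≤ quantile F t' :=
  csInf_le_csInf ⟨0, fun _ hx => hx.1⟩ ⟨b, hb, h'⟩ (fun _ hx => ⟨hx.1, htt.trans hx.2⟩)

lemma F_quantile {F : ℝ → ℝ} (hFcont : Continuous F) (hFmono : StrictMonoOn F (Ici 0))
    (hF0 : F 0 = 0) {t b : ℝ} (ht : 0 < t) (hb : 0 ≤ b) (htb : t ≤ F b) :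
    F (quantile F t) = t := by
  set S : Set ℝ := {x | 0 ≤ x ∧ t ≤ F x} with hS
  have hSne : S.Nonempty := ⟨b, hb, htb⟩
  have hSbdd : BddBelow S := ⟨0, fun _ hx => hx.1⟩
  have hSclosed : IsClosed S := by
    have : S = Ici 0 ∩ F ⁻¹' (Ici t) := by
      ext x; simp [hS, Set.mem_setOf_eq, Set.mem_Ici, and_comm]
    rw [this]
    exact isClosed_Ici.inter (isClosed_Ici.preimage hFcont)
  have hmem : sInf S ∈ S := hSclosed.csInf_mem hSne hSbdd
  rcases eq_or_lt_of_le hmem.2 with h | h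
  · exact h.symm
  · exfalso
    have h0q : (0:ℝ) ≤ sInf S := hmem.1
    have hIVT : t ∈ Icc (F 0) (F (sInf S)) := ⟨by rw [hF0]; exact ht.le, hmem.2⟩
    obtain ⟨x, hx, hfx⟩ := intermediate_value_Icc h0q (hFcont.continuousOn) hIVT
    have hxS : x ∈ S := ⟨hx.1, hfx.ge⟩
    have hxlt : x < sInf S := by
      rcases eq_or_lt_of_le hx.2 with h' | h'
      · exfalso; rw [h'] at hfx; exact absurd hfx (ne_of_gt h)
      · exact h'
    exact absurd (csInf_le hSbdd hxS) (not_le.mpr hxlt)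

lemma quantile_pos {F : ℝ → ℝ} (hFcont : Continuous F) (hFmono : StrictMonoOn F (Ici 0))
    (hF0 : F 0 = 0) {t b : ℝ} (ht : 0 < t) (hb : 0 ≤ b) (htb : t ≤ F b) :
    0 < quantile F t := by
  have hq := F_quantile hFcont hFmono hF0 ht hb htb
  rcases eq_or_lt_of_le (quantile_nonneg F t) with h | h
  · exfalso; rw [← h, hF0] at hq; exact absurd hq.symm (ne_of_gt ht)
  · exact h

lemma lt_quantile_iff {F : ℝ → ℝ} (hFcont : Continuous F) (hFmono : StrictMonoOn F (Ici 0))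
    (hF0 : F 0 = 0) {t b x : ℝ} (ht : 0 < t) (hb : 0 ≤ b) (htb : t ≤ F b) (hx : 0 ≤ x) :
    x < quantile F t ↔ F x < t := by
  have hq := F_quantile hFcont hFmono hF0 ht hb htb
  constructor
  · intro h
    have := hFmono hx (quantile_nonneg F t) h
    rwa [hq] at this
  · intro h
    by_contra hc
    push_neg at hc
    have := hFmono.monotoneOn (quantile_nonneg F t) hx hc
    rw [hq] at this
    exact absurd h (not_lt.mpr this)

/-- **Lorenz curve criterion for extinction of the weakest-first society.**
If `X ≥ 0` has continuous, strictly increasing distribution function `F` with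
`F(0) = 0` and finite mean `μ > 0`, `m > 1`, `0 < r ≤ m·μ`, and `τ ≥ 0`
satisfies `m ∫₀^τ x dF(x) = r`, then `m·F(τ) < 1 ↔ LC(1/m) > r/(m·μ)`. -/
theorem lorenz_wfs_extinction_criterion
    {Ω : Type*} [MeasurableSpace Ω] (P : Measure Ω) [IsProbabilityMeasure P]
    (X : Ω → ℝ) (hXmeas : Measurable X) (hXnonneg : ∀ ω, 0 ≤ X ω)
    (hXint : Integrable X P)
    (μ : ℝ) (hμ : μ = ∫ ω, X ω ∂P) (hμpos : 0 < μ)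
    (F : ℝ → ℝ) (hF : ∀ x, F x = (P {ω | X ω ≤ x}).toReal)
    (hFcont : Continuous F) (hFmono : StrictMonoOn F (Ici 0)) (hF0 : F 0 = 0)
    (m r : ℝ) (hm : 1 < m) (hrpos : 0 < r) (hrm : r ≤ m * μ)
    (τ : ℝ) (hτnonneg : 0 ≤ τ)
    (hτ : m * ∫ ω in {ω | X ω ≤ τ}, X ω ∂P = r) :
    m * F τ < 1 ↔ r / (m * μ) < lorenz F μ (1 / m) := by
  have hm0 : (0:ℝ) < m := lt_trans one_pos hm
  -- τ > 0
  have hτpos : 0 < τ := by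
    rcases eq_or_lt_of_le hτnonneg with h | h
    · exfalso
      have hset : MeasurableSet {ω | X ω ≤ τ} := hXmeas measurableSet_Iic
      have : ∫ ω in {ω | X ω ≤ τ}, X ω ∂P = 0 := by
        rw [show (fun ω => X ω) = X from rfl]
        rw [setIntegral_congr_fun hset (g := fun _ => (0:ℝ))
          (fun ω hω => le_antisymm (h ▸ hω) (hXnonneg ω))]
        simp
      rw [this, mul_zero] at hτ
      exact absurd hτ.symm (ne_of_gt hrpos)
    · exact h
  have hFτpos : 0 < F τ := by
    have := hFmono (self_mem_Ici) hτnonneg hτpos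
    rwa [hF0] at this
  have hF1 : ∀ x, F x ≤ 1 := by
    intro x
    rw [hF x]
    exact ENNReal.toReal_le_of_le_ofReal one_pos.le (by simpa using prob_le_one)
  have hFτlt1 : F τ < 1 :=
    lt_of_lt_of_le (hFmono hτnonneg (le_trans hτnonneg (le_of_lt (lt_add_one τ)))
      (lt_add_one τ)) (hF1 (τ + 1))
  -- existence of b with 1/m ≤ F b
  have h1m_lt1 : 1 / m < 1 := by
    rw [div_lt_one hm0]; exact hm
  have h1m_pos : 0 < 1 / m := by positivity
  have hexists : ∃ b : ℝ, 0 ≤ b ∧ 1 / m ≤ F b := by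
    have hmono : Monotone (fun n : ℕ => {ω | X ω ≤ (n:ℝ)}) := by
      intro a b hab ω hω
      simp only [mem_setOf_eq] at hω ⊢
      exact le_trans hω (Nat.cast_le.mpr hab)
    have hun : ⋃ n : ℕ, {ω | X ω ≤ (n:ℝ)} = univ := by
      ext ω
      simp only [mem_iUnion, mem_setOf_eq, mem_univ, iff_true]
      exact ⟨⌈X ω⌉₊, Nat.le_ceil _⟩
    have ht := tendsto_measure_iUnion_atTop (μ := P) hmono
    rw [hun, measure_univ] at ht
    have h1m : ENNReal.ofReal (1 / m) < 1 := ENNReal.ofReal_lt_one.mpr h1m_lt1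
    have hev := ht.eventually (eventually_gt_nhds h1m)
    obtain ⟨n, hn⟩ := hev.exists
    refine ⟨(n:ℝ), Nat.cast_nonneg n, ?_⟩
    rw [hF]
    exact (ENNReal.ofReal_le_iff_le_toReal (measure_ne_top P _)).mp hn.le
  obtain ⟨b₀, hb₀, hFb₀⟩ := hexists
  set bmax := max b₀ τ with hbmax
  have hbmax0 : 0 ≤ bmax := le_trans hb₀ (le_max_left _ _)
  set c := max (1 / m) (F τ) with hc
  have hFbmax : c ≤ F bmax := by
    apply max_le
    · exact le_trans hFb₀ (hFmono.monotoneOn hb₀ hbmax0 (le_max_left _ _))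
    · exact hFmono.monotoneOn hτnonneg hbmax0 (le_max_right _ _)
  have hqmono : MonotoneOn (quantile F) (Iic c) := fun t ht t' ht' htt =>
    quantile_mono hbmax0 (le_trans ht' hFbmax) htt
  have hsub : ∀ a b : ℝ, a ≤ c → b ≤ c → uIcc a b ⊆ Iic c := by
    intro a b ha hb x hx
    exact le_trans hx.2 (max_le ha hb)
  have hFτc : F τ ≤ c := le_max_right _ _
  have h1mc : 1 / m ≤ c := le_max_left _ _
  have h0c : (0:ℝ) ≤ c := le_trans h1m_pos.le h1mc
  have hint1 : IntervalIntegrable (quantile F) volume 0 (1 / m) :=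
    (hqmono.mono (hsub _ _ h0c h1mc)).intervalIntegrable
  have hint2 : IntervalIntegrable (quantile F) volume 0 (F τ) :=
    (hqmono.mono (hsub _ _ h0c hFτc)).intervalIntegrable
  have hint3 : IntervalIntegrable (quantile F) volume (F τ) (1 / m) :=
    (hqmono.mono (hsub _ _ hFτc h1mc)).intervalIntegrable
  -- layer cake for the quantile integral
  have hq_eq : ∫ s in (0:ℝ)..(F τ), quantile F s
      = ∫ t in Ioi (0:ℝ), (ENNReal.ofReal (F τ - F t)).toReal := by
    rw [intervalIntegral.integral_of_le hFτpos.le]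
    have hintOn : Integrable (quantile F) (volume.restrict (Ioc 0 (F τ))) := hint2.1
    rw [hintOn.integral_eq_integral_meas_lt
      (ae_of_all _ fun s => quantile_nonneg F s)]
    apply setIntegral_congr_fun measurableSet_Ioi
    intro t ht
    simp only
    rw [measureReal_def, Measure.restrict_apply' measurableSet_Ioc]
    have hset : {s : ℝ | t < quantile F s} ∩ Ioc 0 (F τ) = Ioc (F t) (F τ) := by
      ext s
      simp only [mem_inter_iff, mem_setOf_eq, mem_Ioc]
      constructor
      · rintro ⟨hq, hs0, hsτ⟩
        refine ⟨?_, hsτ⟩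
        exact ((lt_quantile_iff hFcont hFmono hF0 hs0 hτnonneg hsτ (le_of_lt ht)).mp hq)
      · rintro ⟨hFt, hsτ⟩
        have hFt0 : 0 ≤ F t := by rw [← hF0]; exact hFmono.monotoneOn self_mem_Ici (show (0:ℝ) ≤ t from le_of_lt ht) (le_of_lt ht)
        have hs0 : 0 < s := lt_of_le_of_lt hFt0 hFt
        exact ⟨(lt_quantile_iff hFcont hFmono hF0 hs0 hτnonneg hsτ (le_of_lt ht)).mpr hFt,
          hs0, hsτ⟩
    rw [hset, Real.volume_Ioc]
  -- layer cake for the truncated mean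
  have hX_eq : ∫ ω in {ω | X ω ≤ τ}, X ω ∂P
      = ∫ t in Ioi (0:ℝ), (ENNReal.ofReal (F τ - F t)).toReal := by
    have hset : MeasurableSet {ω | X ω ≤ τ} := hXmeas measurableSet_Iic
    have hintr : Integrable X (P.restrict {ω | X ω ≤ τ}) := hXint.restrict
    rw [hintr.integral_eq_integral_meas_lt (ae_of_all _ hXnonneg)]
    apply setIntegral_congr_fun measurableSet_Ioi
    intro t ht
    simp only
    rw [measureReal_def, Measure.restrict_apply' hset]
    rcases lt_or_ge t τ with htτ | htτ
    · have hsub' : {ω | X ω ≤ t} ⊆ {ω | X ω ≤ τ} := fun ω hω => le_trans hω htτ.le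
      have hsetEq : {a | t < X a} ∩ {ω | X ω ≤ τ} = {ω | X ω ≤ τ} \ {ω | X ω ≤ t} := by
        ext ω
        simp only [mem_inter_iff, mem_setOf_eq, mem_diff, not_le]
        tauto
      rw [hsetEq, measure_diff hsub' (hXmeas measurableSet_Iic).nullMeasurableSet
        (measure_ne_top P _)]
      rw [ENNReal.toReal_sub_of_le (measure_mono hsub') (measure_ne_top P _)]
      rw [← hF, ← hF, ENNReal.toReal_ofReal]
      rw [sub_nonneg]
      exact hFmono.monotoneOn (show (0:ℝ) ≤ t from le_of_lt ht) hτnonneg htτ.le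
    · have hsetEq : {a | t < X a} ∩ {ω | X ω ≤ τ} = (∅ : Set Ω) := by
        ext ω
        simp only [mem_inter_iff, mem_setOf_eq, mem_empty_iff_false, iff_false, not_and, not_le]
        intro h
        exact lt_of_le_of_lt htτ h
      rw [hsetEq]
      simp only [measure_empty, ENNReal.toReal_zero]
      have : F τ - F t ≤ 0 := by
        rw [sub_nonpos]
        exact hFmono.monotoneOn hτnonneg (le_trans hτnonneg htτ) htτ
      rw [ENNReal.ofReal_eq_zero.mpr this, ENNReal.toReal_zero]
  set K := ∫ s in (0:ℝ)..(F τ), quantile F s with hK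
  set I := ∫ s in (0:ℝ)..(1 / m), quantile F s with hI
  have hKr : m * K = r := by
    rw [hq_eq, ← hX_eq]; exact hτ
  have hlorenz : lorenz F μ (1 / m) = (1 / μ) * I := rfl
  have hrK : r / (m * μ) = K / μ := by
    rw [← hKr]
    field_simp
  constructor
  · intro h
    have hFτlt : F τ < 1 / m := by
      rw [lt_div_iff₀ hm0]; linarith [mul_comm m (F τ)]
    set s₀ := (F τ + 1 / m) / 2 with hs₀
    have hs₀1 : F τ < s₀ := by rw [hs₀]; linarith
    have hs₀2 : s₀ < 1 / m := by rw [hs₀]; linarith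
    have hs₀pos : 0 < s₀ := lt_trans hFτpos hs₀1
    have hqs₀pos : 0 < quantile F s₀ :=
      quantile_pos hFcont hFmono hF0 hs₀pos hbmax0
        (le_trans (le_trans hs₀2.le h1mc) hFbmax)
    have hint4 : IntervalIntegrable (quantile F) volume (F τ) s₀ :=
      (hqmono.mono (hsub _ _ hFτc (le_trans hs₀2.le h1mc))).intervalIntegrable
    have hint5 : IntervalIntegrable (quantile F) volume s₀ (1 / m) :=
      (hqmono.mono (hsub _ _ (le_trans hs₀2.le h1mc) h1mc)).intervalIntegrable
    have hsplit : K + ∫ s in (F τ)..(1 / m), quantile F s = I :=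
      intervalIntegral.integral_add_adjacent_intervals hint2 hint3
    have hsplit2 : (∫ s in (F τ)..s₀, quantile F s) + ∫ s in s₀..(1 / m), quantile F s
        = ∫ s in (F τ)..(1 / m), quantile F s :=
      intervalIntegral.integral_add_adjacent_intervals hint4 hint5
    have hpart1 : 0 ≤ ∫ s in (F τ)..s₀, quantile F s :=
      intervalIntegral.integral_nonneg hs₀1.le (fun s _ => quantile_nonneg F s)
    have hpart2 : (1 / m - s₀) * quantile F s₀ ≤ ∫ s in s₀..(1 / m), quantile F s := by
      have hconst : ∫ s in s₀..(1 / m), quantile F s₀ = (1 / m - s₀) * quantile F s₀ := by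
        rw [intervalIntegral.integral_const, smul_eq_mul]
      rw [← hconst]
      apply intervalIntegral.integral_mono_on hs₀2.le
        (intervalIntegrable_const) hint5
      intro x hx
      exact hqmono (le_trans hs₀2.le h1mc) (le_trans hx.2 h1mc) hx.1
    have hKI : K < I := by
      have : 0 < ∫ s in (F τ)..(1 / m), quantile F s := by
        rw [← hsplit2]
        have : 0 < (1 / m - s₀) * quantile F s₀ := by
          apply mul_pos _ hqs₀pos
          linarith
        linarith
      linarith
    rw [hrK, hlorenz]
    have : (1 / μ) * I = I / μ := by ring
    rw [this]
    exact (div_lt_div_iff_of_pos_right hμpos).mpr hKI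
  · intro h
    by_contra hc'
    push_neg at hc'
    have h1mFτ : 1 / m ≤ F τ := by
      rw [div_le_iff₀ hm0]; linarith [mul_comm m (F τ)]
    have hsplit : I + ∫ s in (1 / m)..(F τ), quantile F s = K :=
      intervalIntegral.integral_add_adjacent_intervals hint1 hint3.symm
    have hpart : 0 ≤ ∫ s in (1 / m)..(F τ), quantile F s :=
      intervalIntegral.integral_nonneg h1mFτ (fun s _ => quantile_nonneg F s)
    have hIK : I ≤ K := by linarith
    rw [hrK, hlorenz] at h
    have heq : (1 / μ) * I = I / μ := by ring
    rw [heq] at h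
    have := (div_lt_div_iff_of_pos_right hμpos).mp h
    linarith

end
end
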